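/- Let H₁, H₂ : Matrix G G R be Hadamard matrices. Then det(H₁ + H₂) = det H₁ + det H₂. -/

import Mathlib

open Matrix Finset

section Aux

variable {k : ℕ} {S : Type*} [CommRing S] [CharP S 2]

private lemma G_add_self (g : Fin k → ZMod 2) : g + g = 0 := by
  funext i
  exact CharTwo.add_self_eq_zero (g i)

/-- A Hadamard matrix squares to a scalar matrix. -/
private lemma had_sq (a : (Fin k → ZMod 2) → S) :
    (Matrix.of fun i j => a (i + j)) * (Matrix.of fun i j => a (i + j))
      = ((∑ g, a g) ^ 2) • (1 : Matrix (Fin k → ZMod 2) (Fin k → ZMod 2) S) := by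
  ext i j
  rw [Matrix.mul_apply]
  have h1 : ∑ g, a (i + g) * a (g + j) = ∑ h, a h * a (h + (i + j)) := by
    refine Fintype.sum_equiv (Equiv.addLeft i) _ _ ?_
    intro g
    simp only [Equiv.coe_addLeft]
    congr 2
    rw [show i + g + (i + j) = g + j + (i + i) from by ring, G_add_self, add_zero]
  simp only [of_apply]
  rw [h1]
  by_cases hij : i = j
  · subst hij
    rw [G_add_self]
    simp only [add_zero, Matrix.smul_apply, Matrix.one_apply_eq, smul_eq_mul, mul_one]
    rw [sum_pow_char]
    exact Finset.sum_congr rfl fun h _ => (sq (a h)).symm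
  · have hc : i + j ≠ 0 := by
      intro h
      apply hij
      have := congrArg (· + j) h
      simpa [add_assoc, G_add_self] using this
    rw [Matrix.smul_apply, Matrix.one_apply_ne hij, smul_zero]
    refine Finset.sum_ninvolution (fun h => h + (i + j)) ?_ ?_ (fun _ => Finset.mem_univ _) ?_
    · intro h
      show a h * a (h + (i + j)) + a (h + (i + j)) * a (h + (i + j) + (i + j)) = 0
      rw [add_assoc, G_add_self, add_zero, mul_comm]
      exact CharTwo.add_self_eq_zero _
    · intro h _ heq
      exact absurd (add_eq_left.mp heq) hc
    · intro h
      show h + (i + j) + (i + j) = h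
      rw [add_assoc, G_add_self, add_zero]

private lemma card_G : Fintype.card (Fin k → ZMod 2) = 2 ^ k := by
  simp [Fintype.card_fun]

/-- Over an integral domain of char 2, the determinant of a Hadamard matrix is
its eigenvalue raised to `2^k`. -/
private lemma had_det {D : Type*} [CommRing D] [IsDomain D] [CharP D 2]
    (a : (Fin k → ZMod 2) → D) :
    (Matrix.of fun i j => a (i + j)).det = (∑ g, a g) ^ 2 ^ k := by
  have h2 : ((Matrix.of fun i j => a (i + j)).det) ^ 2 = ((∑ g, a g) ^ 2 ^ k) ^ 2 := by
    rw [sq, ← Matrix.det_mul, had_sq, Matrix.det_smul, Matrix.det_one, mul_one, card_G]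
    ring
  have h3 : ((Matrix.of fun i j => a (i + j)).det + (∑ g, a g) ^ 2 ^ k) ^ 2 = 0 := by
    rw [add_pow_char, h2]
    exact CharTwo.add_self_eq_zero _
  have h4 := pow_eq_zero_iff (n := 2) (by norm_num) |>.mp h3
  have h5 := eq_neg_of_add_eq_zero_left h4
  rw [h5, CharTwo.neg_eq]

end Aux

/-- For Hadamard matrices `H₁, H₂` over a commutative ring of characteristic 2,
`det (H₁ + H₂) = det H₁ + det H₂`. -/
theorem hadamard_det_add (k : ℕ) (R : Type*) [CommRing R] [CharP R 2]
    (H₁ H₂ : Matrix (Fin k → ZMod 2) (Fin k → ZMod 2) R)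
    (h₁ : ∃ a : (Fin k → ZMod 2) → R, ∀ i j, H₁ i j = a (i + j))
    (h₂ : ∃ b : (Fin k → ZMod 2) → R, ∀ i j, H₂ i j = b (i + j)) :
    (H₁ + H₂).det = H₁.det + H₂.det := by
  obtain ⟨a, ha⟩ := h₁
  obtain ⟨b, hb⟩ := h₂
  -- universal domain
  have φX : ∀ s : (Fin k → ZMod 2) ⊕ (Fin k → ZMod 2),
      MvPolynomial.eval₂Hom (ZMod.castHom (dvd_refl 2) R) (Sum.elim a b) (MvPolynomial.X s)
        = Sum.elim a b s := fun s => MvPolynomial.eval₂Hom_X' _ _ _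
  have hA : H₁ = (Matrix.of fun i j =>
      (MvPolynomial.X (Sum.inl (i + j)) :
        MvPolynomial ((Fin k → ZMod 2) ⊕ (Fin k → ZMod 2)) (ZMod 2))).map
      (MvPolynomial.eval₂Hom (ZMod.castHom (dvd_refl 2) R) (Sum.elim a b)) := by
    ext i j
    rw [ha, Matrix.map_apply, of_apply, φX]; rfl
  have hB : H₂ = (Matrix.of fun i j =>
      (MvPolynomial.X (Sum.inr (i + j)) :
        MvPolynomial ((Fin k → ZMod 2) ⊕ (Fin k → ZMod 2)) (ZMod 2))).map
      (MvPolynomial.eval₂Hom (ZMod.castHom (dvd_refl 2) R) (Sum.elim a b)) := by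
    ext i j
    rw [hb, Matrix.map_apply, of_apply, φX]; rfl
  have hAB : H₁ + H₂ = (Matrix.of fun i j =>
      ((fun g => MvPolynomial.X (Sum.inl g) + MvPolynomial.X (Sum.inr g) :
        (Fin k → ZMod 2) → MvPolynomial ((Fin k → ZMod 2) ⊕ (Fin k → ZMod 2)) (ZMod 2))
        (i + j))).map
      (MvPolynomial.eval₂Hom (ZMod.castHom (dvd_refl 2) R) (Sum.elim a b)) := by
    ext i j
    rw [Matrix.add_apply, ha, hb, Matrix.map_apply, of_apply, map_add, φX, φX]
    rfl
  rw [hAB, hA, hB]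
  simp only [← RingHom.mapMatrix_apply, ← RingHom.map_det, ← map_add]
  congr 1
  have k1 := had_det (fun g : Fin k → ZMod 2 =>
    (MvPolynomial.X (Sum.inl g) : MvPolynomial ((Fin k → ZMod 2) ⊕ (Fin k → ZMod 2)) (ZMod 2)))
  have k2 := had_det (fun g : Fin k → ZMod 2 =>
    (MvPolynomial.X (Sum.inr g) : MvPolynomial ((Fin k → ZMod 2) ⊕ (Fin k → ZMod 2)) (ZMod 2)))
  have k3 := had_det (fun g : Fin k → ZMod 2 =>
    (MvPolynomial.X (Sum.inl g) + MvPolynomial.X (Sum.inr g) :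
      MvPolynomial ((Fin k → ZMod 2) ⊕ (Fin k → ZMod 2)) (ZMod 2)))
  rw [k1, k2, k3, Finset.sum_add_distrib]
  haveI : Fact (Nat.Prime 2) := ⟨Nat.prime_two⟩
  exact add_pow_char_pow _ _ 2 k
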